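/- There exists an optimal conditional decompressor: a partial computable function U₂ taking pairs of binary strings to binary strings such that for every partial computable function D taking pairs of binary strings to binary strings there is a constant c with K_{U₂}(x|y) ≤ K_D(x|y) + c for all binary strings x and y. -/

import Mathlib

/-- Conditional Kolmogorov complexity of `x` given `y` with respect to a
conditional decompressor `D`: the minimal length of `p` with `D (p, y) = x`. -/
noncomputable def KcCond (D : List Bool × List Bool →. List Bool)
    (x y : List Bool) : ℕ∞ :=
  sInf {n : ℕ∞ | ∃ p : List Bool, x ∈ D (p, y) ∧ (p.length : ℕ∞) = n}

open Nat.Partrec (Code)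
open Nat.Partrec.Code Encodable Denumerable

/-- The universal conditional decompressor. -/
noncomputable def U2 : List Bool × List Bool →. List Bool :=
  fun a =>
    (eval (ofNat Code (a.1.idxOf false))
        (encode (a.1.drop (a.1.idxOf false + 1), a.2))).bind
      fun m => Part.ofOption (decode (α := List Bool) m)

lemma primrec_drop : Primrec₂ fun (l : List Bool) (n : ℕ) => l.drop n := by
  have h := Primrec.nat_rec (f := fun l : List Bool => l)
    (g := fun (_ : List Bool) (p : ℕ × List Bool) => p.2.tail)
    Primrec.id (Primrec.list_tail.comp (Primrec.snd.comp Primrec.snd))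
  refine h.of_eq fun l n => ?_
  induction n with
  | zero => simp
  | succ n ih => simp [ih, List.tail_drop]

lemma U2_partrec : Partrec U2 := by
  have hidx : Computable fun a : List Bool × List Bool => a.1.idxOf false :=
    (Primrec.list_idxOf.comp (.const false) .fst).to_comp
  have h1 : Computable fun a : List Bool × List Bool => ofNat Code (a.1.idxOf false) :=
    (Computable.ofNat Code).comp hidx
  have h2 : Computable fun a : List Bool × List Bool =>
      encode (a.1.drop (a.1.idxOf false + 1), a.2) :=
    Computable.encode.comp
      ((primrec_drop.to_comp.comp Computable.fst
        (Computable.succ.comp hidx)).pair Computable.snd)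
  exact (eval_part.comp h1 h2).bind
    ((Computable.decode.comp Computable.snd).ofOption)

lemma idxOf_replicate (e : ℕ) (p : List Bool) :
    (List.replicate e true ++ false :: p).idxOf false = e := by
  induction e with
  | zero => simp [List.idxOf_cons]
  | succ e ih => simp [List.replicate_succ, List.idxOf_cons, ih]

lemma drop_replicate (e : ℕ) (p : List Bool) :
    (List.replicate e true ++ false :: p).drop (e + 1) = p := by
  induction e with
  | zero => simp
  | succ e ih => simpa [List.replicate_succ] using ih

/-- There exists an optimal conditional decompressor. -/
theorem exists_optimal_conditional_decompressor :
    ∃ U₂ : List Bool × List Bool →. List Bool, Partrec U₂ ∧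
      ∀ D : List Bool × List Bool →. List Bool, Partrec D →
        ∃ c : ℕ, ∀ x y : List Bool, KcCond U₂ x y ≤ KcCond D x y + (c : ℕ∞) := by
  refine ⟨U2, U2_partrec, fun D hD => ?_⟩
  obtain ⟨cD, hcD⟩ := exists_code.1 hD
  refine ⟨encode cD + 1, fun x y => ?_⟩
  rcases ({n : ℕ∞ | ∃ p : List Bool, x ∈ D (p, y) ∧ (p.length : ℕ∞) = n}).eq_empty_or_nonempty
    with hS | hS
  · simp only [KcCond, hS, sInf_empty]; exact le_top
  · obtain ⟨p, hp, hlen⟩ := csInf_mem hS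
    set p' : List Bool := List.replicate (encode cD) true ++ false :: p with hp'
    have hx : x ∈ U2 (p', y) := by
      have hidx : p'.idxOf false = encode cD := idxOf_replicate _ _
      have hdrop : p'.drop (encode cD + 1) = p := drop_replicate _ _
      simp only [U2, hidx, hdrop, ofNat_encode]
      rw [hcD]
      simp only [Part.bind_eq_bind, Part.mem_bind_iff]
      refine ⟨encode x, ?_, ?_⟩
      · exact ⟨(p, y), by simp, Part.mem_map encode hp⟩
      · simp [Part.ofOption]
    have hU : (p'.length : ℕ∞) ∈
        {n : ℕ∞ | ∃ q : List Bool, x ∈ U2 (q, y) ∧ ((q.length : ℕ) : ℕ∞) = n} :=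
      ⟨p', hx, rfl⟩
    calc KcCond U2 x y ≤ (p'.length : ℕ∞) := sInf_le hU
      _ = (p.length : ℕ∞) + ((encode cD + 1 : ℕ) : ℕ∞) := by
          simp only [hp', List.length_append, List.length_replicate, List.length_cons]
          push_cast
          ring
      _ ≤ KcCond D x y + ((encode cD + 1 : ℕ) : ℕ∞) := by
          rw [KcCond, ← hlen]
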